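/- Let T ⊆ ℝⁿ be a closed regular set, I ⊆ ℤ₊ⁿ a finite regular set of multi-indices, and g = (g_i)_{i∈I} with g_0 = 1. If the Riesz functional φ_g : P_I → ℝ satisfies φ_g(p) > 0 for every nonzero p ∈ P_I with p(t) ≥ 0 for all t ∈ T, then there exists f ∈ L¹(T, dt) with f ≥ 0 a.e., ∫_T |t^i| f(t) dt < ∞ for all i ∈ I, and ∫_T t^i f(t) dt = g_i for all i ∈ I. -/

import Mathlib

open MeasureTheory

/-- `P_I`: the linear span of the monomials `X^i`, `i ∈ I`, in `ℝ[X₁,…,Xₙ]`. -/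
noncomputable def PIdx (n : ℕ) (I : Finset (Fin n →₀ ℕ)) :
    Submodule ℝ (MvPolynomial (Fin n) ℝ) :=
  Submodule.span ℝ {q | ∃ i ∈ I, q = MvPolynomial.monomial i 1}

/-- The Riesz functional `φ_g` associated to `g = (g_i)_{i ∈ I}`: on `P_I` it sends
`Σ_{i ∈ I} c_i X^i` to `Σ_{i ∈ I} g_i c_i`. -/
noncomputable def riesz (n : ℕ) (I : Finset (Fin n →₀ ℕ)) (g : I → ℝ)
    (p : MvPolynomial (Fin n) ℝ) : ℝ :=
  ∑ i : I, g i * MvPolynomial.coeff i.1 p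

/-- The monomial function `t ^ i = t₁^{i₁} ⋯ tₙ^{iₙ}` on `ℝⁿ`. -/
noncomputable def monoF (n : ℕ) (i : Fin n →₀ ℕ) (t : EuclideanSpace ℝ (Fin n)) : ℝ :=
  ∏ k, t k ^ i k

/-- A set `T ⊆ ℝⁿ` is regular if it is nonempty and for every `t ∈ T` and `ε > 0` the
Lebesgue measure of `{x ∈ T : ‖x - t‖ < ε}` is positive. -/
def RegularSet (n : ℕ) (T : Set (EuclideanSpace ℝ (Fin n))) : Prop :=
  T.Nonempty ∧ ∀ t ∈ T, ∀ ε > (0 : ℝ), 0 < volume {x ∈ T | ‖x - t‖ < ε}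

/-- A finite set `I` of multi-indices is regular if it is nonempty and for every `i ∈ I` the
set `σ_i = {j : j k = 0 or j k = i k for each k}` is contained in `I`. -/
def RegularIdx (n : ℕ) (I : Finset (Fin n →₀ ℕ)) : Prop :=
  I.Nonempty ∧ ∀ i ∈ I, ∀ j : Fin n →₀ ℕ, (∀ k, j k = 0 ∨ j k = i k) → j ∈ I


lemma monoF_continuous (n : ℕ) (i : Fin n →₀ ℕ) : Continuous (monoF n i) := by
  unfold monoF
  exact continuous_finset_prod _ fun k _ => ((EuclideanSpace.proj k).continuous.pow _)


lemma sep_cone {d : Type*} [Fintype d] (S : Set (d → ℝ))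
    (hconv : Convex ℝ S) (h0 : (0 : d → ℝ) ∈ S)
    (hsmul : ∀ r : ℝ, 0 ≤ r → ∀ v ∈ S, r • v ∈ S)
    (g : d → ℝ) (hg : g ∉ S) :
    ∃ c : d → ℝ, c ≠ 0 ∧ (∀ v ∈ S, 0 ≤ ∑ i, c i * v i) ∧ ∑ i, c i * g i ≤ 0 := by
  classical
  have main : ∃ ψ : (d → ℝ) →ₗ[ℝ] ℝ, (∃ w, ψ w ≠ 0) ∧ (∀ v ∈ S, ψ v ≤ 0) ∧ 0 ≤ ψ g := by
    by_cases hspan : Submodule.span ℝ S = ⊤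
    · -- interior nonempty case, Hahn-Banach
      have hvs : vectorSpan ℝ S = ⊤ := by
        rw [vectorSpan_eq_span_vsub_set_right ℝ h0]
        simpa [vsub_eq_sub, Set.image_id'] using hspan
      have haff : affineSpan ℝ S = ⊤ :=
        (AffineSubspace.affineSpan_eq_top_iff_vectorSpan_eq_top_of_nonempty ℝ _ _ ⟨0, h0⟩).2 hvs
      obtain ⟨x₀, hx₀⟩ := hconv.interior_nonempty_iff_affineSpan_eq_top.2 haff
      obtain ⟨φ, hφ⟩ := geometric_hahn_banach_open_point hconv.interior isOpen_interior
        (fun h => hg (interior_subset h))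
      have hle : ∀ v ∈ S, φ v ≤ φ g := by
        intro v hv
        by_contra hlt
        push_neg at hlt
        have key : ∀ t : ℝ, t ∈ Set.Ioc (0:ℝ) 1 → φ v + t * (φ x₀ - φ v) < φ g := by
          intro t ht
          have hmem := hconv.add_smul_sub_mem_interior hv hx₀ ht
          have := hφ _ hmem
          simpa [map_add, _root_.map_smul, map_sub, smul_eq_mul] using this
        have h1 := key 1 ⟨one_pos, le_refl 1⟩
        have hd : φ x₀ - φ v < 0 := by linarith
        set d0 : ℝ := φ x₀ - φ v with hd0
        set t0 : ℝ := min 1 ((φ g - φ v) / (2 * d0)) with ht0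
        have hq : 0 < (φ g - φ v) / (2 * d0) :=
          div_pos_iff.2 (Or.inr ⟨by linarith, by linarith⟩)
        have ht0pos : 0 < t0 := lt_min one_pos hq
        have ht0le : t0 ≤ (φ g - φ v) / (2 * d0) := min_le_right _ _
        have hk := key t0 ⟨ht0pos, min_le_left _ _⟩
        have hmul : (φ g - φ v) / (2 * d0) * d0 ≤ t0 * d0 :=
          mul_le_mul_of_nonpos_right ht0le hd.le
        have hdne : d0 ≠ 0 := ne_of_lt hd
        have : (φ g - φ v) / (2 * d0) * d0 = (φ g - φ v) / 2 := by
          field_simp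
        rw [this] at hmul
        clear_value t0 d0
        linarith
      have hg0 : 0 ≤ φ g := by simpa using hle 0 h0
      have hnonpos : ∀ v ∈ S, φ v ≤ 0 := by
        intro v hv
        by_contra h
        push_neg at h
        have hr : 0 < (φ g + 1) / φ v := div_pos (by linarith) h
        have := hle _ (hsmul _ hr.le v hv)
        rw [_root_.map_smul, smul_eq_mul, div_mul_cancel₀ _ (ne_of_gt h)] at this
        linarith
      refine ⟨φ.toLinearMap, ⟨g - x₀, ?_⟩, hnonpos, hg0⟩
      have h := hφ x₀ hx₀
      simp only [ContinuousLinearMap.coe_coe, map_sub]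
      exact sub_ne_zero.2 (ne_of_gt h)
    · -- span is proper: take an annihilating functional
      obtain ⟨f, hf0, hfmap⟩ :=
        Submodule.exists_dual_map_eq_bot_of_lt_top (lt_top_iff_ne_top.2 hspan) inferInstance
      have hker : ∀ v ∈ S, f v = 0 := by
        intro v hv
        have : f v ∈ (Submodule.span ℝ S).map f :=
          Submodule.mem_map_of_mem (Submodule.subset_span hv)
        rw [hfmap] at this
        exact (Submodule.mem_bot ℝ).1 this
      obtain ⟨w, hw⟩ : ∃ w, f w ≠ 0 := by
        by_contra h
        push_neg at h
        exact hf0 (LinearMap.ext h)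
      by_cases hfg : 0 ≤ f g
      · exact ⟨f, ⟨w, hw⟩, fun v hv => (hker v hv).le, hfg⟩
      · refine ⟨-f, ⟨w, by simpa using hw⟩, fun v hv => ?_, ?_⟩
        · simp [hker v hv]
        · simp only [LinearMap.neg_apply]
          linarith
  obtain ⟨ψ, ⟨w, hw⟩, hψS, hψg⟩ := main
  set c : d → ℝ := fun i => -ψ (fun j => if i = j then 1 else 0) with hc
  have hrep : ∀ v : d → ℝ, ψ v = -∑ i, c i * v i := by
    intro v
    rw [LinearMap.pi_apply_eq_sum_univ ψ v, ← Finset.sum_neg_distrib]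
    refine Finset.sum_congr rfl fun i _ => ?_
    simp only [hc, smul_eq_mul, neg_mul, neg_neg]
    ring
  refine ⟨c, ?_, fun v hv => ?_, ?_⟩
  · intro h
    apply hw
    rw [hrep w, h]
    simp
  · have := hψS v hv
    rw [hrep] at this
    linarith
  · have := hψg
    rw [hrep] at this
    linarith


theorem key_pos (n : ℕ) (T : Set (EuclideanSpace ℝ (Fin n))) (hT : IsClosed T)
    (hTreg : RegularSet n T)
    (I : Finset (Fin n →₀ ℕ))
    (c : ↥I → ℝ) (q : EuclideanSpace ℝ (Fin n) → ℝ)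
    (hq : q = fun x => ∑ i : ↥I, c i * monoF n i.1 x)
    (S : Set (↥I → ℝ))
    (hSdef : S = {v : ↥I → ℝ | ∃ f : EuclideanSpace ℝ (Fin n) → ℝ,
      Integrable f (volume.restrict T) ∧
      (0 ≤ᵐ[volume.restrict T] f) ∧
      (∀ i : I, Integrable (fun t => monoF n i t * f t) (volume.restrict T)) ∧
      (∀ i : I, ∫ t in T, monoF n i t * f t = v i)})
    (hc1 : ∀ v ∈ S, 0 ≤ ∑ i, c i * v i) :
    ∀ t₀ ∈ T, 0 ≤ q t₀ := by
  classical
  intro t₀ ht₀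
  by_contra hneg
  push_neg at hneg
  set δ : ℝ := q t₀ / 2 with hδ
  have hδneg : δ < 0 := by simp only [hδ]; linarith
  have hqcont : Continuous q := by
    rw [hq]; exact continuous_finset_sum _ fun i _ => continuous_const.mul (monoF_continuous n i.1)
  have hU : IsOpen (q ⁻¹' Set.Iio δ) := (isOpen_Iio).preimage hqcont
  have ht₀U : t₀ ∈ q ⁻¹' Set.Iio δ := by
    simp only [Set.mem_preimage, Set.mem_Iio, hδ]; linarith
  obtain ⟨ε, hε, hball⟩ := Metric.isOpen_iff.1 hU t₀ ht₀U
  set ε' : ℝ := min ε 1 with hε'def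
  have hε' : 0 < ε' := lt_min hε one_pos
  set A : Set (EuclideanSpace ℝ (Fin n)) := {x ∈ T | ‖x - t₀‖ < ε'} with hAdef
  have hAT : A ⊆ T := fun x hx => hx.1
  have hAball : A ⊆ Metric.ball t₀ ε' := by
    intro x hx
    rw [Metric.mem_ball, dist_eq_norm]
    exact hx.2
  have hAq : ∀ x ∈ A, q x < δ := by
    intro x hx
    have : x ∈ Metric.ball t₀ ε := by
      rw [Metric.mem_ball, dist_eq_norm]
      exact lt_of_lt_of_le hx.2 (min_le_left _ _)
    exact hball this
  have hAmeas : MeasurableSet A := by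
    have : A = T ∩ {x | ‖x - t₀‖ < ε'} := rfl
    rw [this]
    exact hT.measurableSet.inter
      ((isOpen_lt ((continuous_id.sub continuous_const).norm) continuous_const).measurableSet)
  have hApos : 0 < volume A := hTreg.2 t₀ ht₀ ε' hε'
  have hAfin : volume A < ⊤ :=
    lt_of_le_of_lt (measure_mono hAball) measure_ball_lt_top
  have hIntmono : ∀ i : ↥I, IntegrableOn (monoF n i.1) A volume := by
    intro i
    refine (((monoF_continuous n i.1).continuousOn).integrableOn_compact
      (isCompact_closedBall t₀ 1)).mono_set ?_
    intro x hx
    rw [Metric.mem_closedBall, dist_eq_norm]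
    exact le_trans (hx.2.le) (min_le_right _ _)
  set f₀ : EuclideanSpace ℝ (Fin n) → ℝ := Set.indicator A fun _ => (1:ℝ) with hf₀def
  have hfe : ∀ i : ↥I, (fun t => monoF n i.1 t * f₀ t) = Set.indicator A (monoF n i.1) := by
    intro i
    funext t
    by_cases ht : t ∈ A <;>
      simp [hf₀def, Set.indicator_of_mem, Set.indicator_of_notMem, ht]
  have hIntT : ∀ i : ↥I, Integrable (fun t => monoF n i.1 t * f₀ t) (volume.restrict T) := by
    intro i
    rw [hfe i, integrable_indicator_iff hAmeas, IntegrableOn, Measure.restrict_restrict hAmeas,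
      Set.inter_eq_self_of_subset_left hAT]
    exact hIntmono i
  have hf₀int : Integrable f₀ (volume.restrict T) := by
    rw [hf₀def, integrable_indicator_iff hAmeas, IntegrableOn, Measure.restrict_restrict hAmeas,
      Set.inter_eq_self_of_subset_left hAT]
    exact integrableOn_const hAfin.ne
  set v₀ : ↥I → ℝ := fun i => ∫ t in T, monoF n i.1 t * f₀ t with hv₀def
  have hv₀S : v₀ ∈ S := by
    rw [hSdef]
    exact ⟨f₀, hf₀int,
      Filter.Eventually.of_forall fun t => Set.indicator_nonneg (fun _ _ => zero_le_one) t,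
      hIntT, fun i => rfl⟩
  have hv₀ : ∀ i : ↥I, v₀ i = ∫ x in A, monoF n i.1 x := by
    intro i
    rw [hv₀def]
    simp only
    rw [hfe i, setIntegral_indicator hAmeas, Set.inter_eq_self_of_subset_right hAT]
  have hsum := hc1 v₀ hv₀S
  have hcv : ∑ i, c i * v₀ i = ∫ x in A, q x := by
    rw [hq]
    rw [MeasureTheory.integral_finset_sum _ fun i _ => (hIntmono i).const_mul (c i)]
    refine Finset.sum_congr rfl fun i _ => ?_
    rw [hv₀ i, MeasureTheory.integral_const_mul]
  have hqint : IntegrableOn q A volume := by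
    rw [hq]
    exact integrable_finset_sum _ fun i _ => (hIntmono i).const_mul (c i)
  have hle : ∫ x in A, q x ≤ (volume A).toReal * δ := by
    calc ∫ x in A, q x ≤ ∫ _x in A, δ :=
          setIntegral_mono_on hqint (integrableOn_const hAfin.ne) hAmeas
            fun x hx => (hAq x hx).le
      _ = (volume A).toReal * δ := by rw [setIntegral_const, smul_eq_mul, measureReal_def]
  have htR : 0 < (volume A).toReal := ENNReal.toReal_pos hApos.ne' hAfin.ne
  nlinarith [hsum, hcv, hle, mul_neg_of_pos_of_neg htR hδneg]

/-- **Statement 12.** -/theorem stmt_12 (n : ℕ) (T : Set (EuclideanSpace ℝ (Fin n))) (hT : IsClosed T)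
    (hTreg : RegularSet n T)
    (I : Finset (Fin n →₀ ℕ)) (hIreg : RegularIdx n I)
    (h0I : (0 : Fin n →₀ ℕ) ∈ I) (g : I → ℝ) (hg0 : g ⟨0, h0I⟩ = 1)
    (hpos : ∀ p ∈ PIdx n I, p ≠ 0 →
      (∀ t ∈ T, 0 ≤ MvPolynomial.eval (fun k => t k) p) → 0 < riesz n I g p) :
    ∃ f : EuclideanSpace ℝ (Fin n) → ℝ,
      Integrable f (volume.restrict T) ∧
      (0 ≤ᵐ[volume.restrict T] f) ∧
      (∀ i : I, Integrable (fun t => monoF n i t * f t) (volume.restrict T)) ∧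
      (∀ i : I, ∫ t in T, monoF n i t * f t = g i) := by
  classical
  set S : Set (↥I → ℝ) := {v : ↥I → ℝ | ∃ f : EuclideanSpace ℝ (Fin n) → ℝ,
      Integrable f (volume.restrict T) ∧
      (0 ≤ᵐ[volume.restrict T] f) ∧
      (∀ i : I, Integrable (fun t => monoF n i t * f t) (volume.restrict T)) ∧
      (∀ i : I, ∫ t in T, monoF n i t * f t = v i)} with hSdef
  suffices hgmem : g ∈ S by
    obtain ⟨f, h1, h2, h3, h4⟩ := hgmem
    exact ⟨f, h1, h2, h3, h4⟩
  by_contra hgS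
  -- `S` is a convex cone containing `0`
  have h0S : (0 : ↥I → ℝ) ∈ S := by
    refine ⟨fun _ => 0, ?_, ?_, ?_, ?_⟩
    · simpa using integrable_zero _ ℝ (volume.restrict T)
    · exact Filter.Eventually.of_forall fun t => le_refl 0
    · intro i
      simpa using integrable_zero _ ℝ (volume.restrict T)
    · intro i; simp
  have haddS : ∀ v ∈ S, ∀ w ∈ S, v + w ∈ S := by
    rintro v ⟨f₁, hi₁, hn₁, hm₁, he₁⟩ w ⟨f₂, hi₂, hn₂, hm₂, he₂⟩
    refine ⟨f₁ + f₂, hi₁.add hi₂, ?_, fun i => ?_, fun i => ?_⟩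
    · filter_upwards [hn₁, hn₂] with t h1 h2
      exact add_nonneg h1 h2
    · have : (fun t => monoF n i t * (f₁ + f₂) t)
          = fun t => monoF n i t * f₁ t + monoF n i t * f₂ t := by
        funext t; simp [mul_add]
      rw [this]
      exact (hm₁ i).add (hm₂ i)
    · have : (fun t => monoF n i t * (f₁ + f₂) t)
          = fun t => monoF n i t * f₁ t + monoF n i t * f₂ t := by
        funext t; simp [mul_add]
      rw [this, integral_add (hm₁ i) (hm₂ i), he₁ i, he₂ i, Pi.add_apply]
  have hsmulS : ∀ r : ℝ, 0 ≤ r → ∀ v ∈ S, r • v ∈ S := by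
    rintro r hr v ⟨f₁, hi₁, hn₁, hm₁, he₁⟩
    refine ⟨fun t => r * f₁ t, hi₁.const_mul r, ?_, fun i => ?_, fun i => ?_⟩
    · filter_upwards [hn₁] with t h1
      exact mul_nonneg hr h1
    · have : (fun t => monoF n i t * (r * f₁ t))
          = fun t => r * (monoF n i t * f₁ t) := by
        funext t; ring
      rw [this]
      exact (hm₁ i).const_mul r
    · have : (fun t => monoF n i t * (r * f₁ t))
          = fun t => r * (monoF n i t * f₁ t) := by
        funext t; ring
      rw [this, MeasureTheory.integral_const_mul, he₁ i, Pi.smul_apply, smul_eq_mul]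
  have hconvS : Convex ℝ S := fun v hv w hw a b ha hb _ =>
    haddS _ (hsmulS a ha v hv) _ (hsmulS b hb w hw)
  obtain ⟨c, hcne, hc1, hc2⟩ := sep_cone S hconvS h0S hsmulS g hgS
  -- the polynomial with coefficients `c`
  set p : MvPolynomial (Fin n) ℝ := ∑ i : ↥I, MvPolynomial.monomial i.1 (c i) with hpdef
  set q : EuclideanSpace ℝ (Fin n) → ℝ := fun x => ∑ i : ↥I, c i * monoF n i.1 x with hqdef
  have hcoeff : ∀ j : ↥I, MvPolynomial.coeff j.1 p = c j := by
    intro j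
    rw [hpdef]
    rw [MvPolynomial.coeff_sum]
    have h1 : ∀ i : ↥I, MvPolynomial.coeff j.1 (MvPolynomial.monomial i.1 (c i))
        = if i = j then c i else 0 := by
      intro i
      rw [MvPolynomial.coeff_monomial]
      exact if_congr Subtype.ext_iff.symm rfl rfl
    rw [Finset.sum_congr rfl fun i _ => h1 i, Finset.sum_ite_eq' Finset.univ j c]
    simp
  have heval : ∀ x : EuclideanSpace ℝ (Fin n),
      MvPolynomial.eval (fun k => x k) p = q x := by
    intro x
    rw [hpdef, hqdef, map_sum]
    refine Finset.sum_congr rfl fun i _ => ?_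
    rw [MvPolynomial.eval_monomial, Finsupp.prod_pow]
    rfl
  have hpmem : p ∈ PIdx n I := by
    rw [hpdef]
    refine Submodule.sum_mem _ fun i _ => ?_
    have h1 : MvPolynomial.monomial (i : Fin n →₀ ℕ) (c i)
        = c i • MvPolynomial.monomial (i : Fin n →₀ ℕ) (1:ℝ) := by
      rw [MvPolynomial.smul_monomial, smul_eq_mul, mul_one]
    rw [h1]
    exact Submodule.smul_mem _ _ (Submodule.subset_span ⟨i.1, i.2, rfl⟩)
  have hpne : p ≠ 0 := by
    obtain ⟨j, hj⟩ := Function.ne_iff.1 hcne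
    intro h0
    exact hj (by rw [← hcoeff j, h0, MvPolynomial.coeff_zero]; simp)
  have hqT : ∀ t₀ ∈ T, 0 ≤ q t₀ := by
    exact key_pos n T hT hTreg I c q hqdef S hSdef hc1
  have hp := hpos p hpmem hpne (fun t ht => by rw [heval]; exact hqT t ht)
  have hriesz : riesz n I g p = ∑ i : ↥I, g i * c i := by
    unfold riesz
    exact Finset.sum_congr rfl fun i _ => by rw [hcoeff i]
  rw [hriesz] at hp
  have h2 : ∑ i : ↥I, g i * c i = ∑ i : ↥I, c i * g i :=
    Finset.sum_congr rfl fun i _ => mul_comm _ _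
  rw [h2] at hp
  linarith
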